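/- Let κ = 3/p with p ≥ 2, gcd(p,3)=1, and μ ∈ P a weight of sl(3) with ⟨μ+ρ̄, α⟩ ∈ pZ for some positive root α. Set R(μ) = e^{-2πi⟨θ,μ+ρ̄⟩/(3p)} + e^{2πi⟨α_1,μ+ρ̄⟩/(3p)} + e^{2πi⟨α_2,μ+ρ̄⟩/(3p)}. Then R(μ) = −ε e^{-2πiε/3} |R(μ)| for a sign ε ∈ {±1} determined by which hyperplane H_α^{(p)} the weight μ lies on (ε = +1 for α = θ, ε = −1 for α = α_1 or α_2), and consequently R(μ) + R̄(μ) − ε|R(μ)| = 0. -/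

import Mathlib

open Complex Real

/-- `R(μ) = e^{-2πi⟨θ,μ+ρ̄⟩/(3p)} + e^{2πi⟨α_1,μ+ρ̄⟩/(3p)} + e^{2πi⟨α_2,μ+ρ̄⟩/(3p)}`,
written in terms of the pairings `a_i = ⟨α_i, μ+ρ̄⟩` (so `⟨θ, μ+ρ̄⟩ = a_1 + a_2`). -/
noncomputable def Rval (p : ℕ) (a1 a2 : ℤ) : ℂ :=
  Complex.exp (-(2 * (π : ℂ) * I * ((a1 : ℂ) + (a2 : ℂ))) / (3 * (p : ℂ))) +
    Complex.exp (2 * (π : ℂ) * I * (a1 : ℂ) / (3 * (p : ℂ))) +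
    Complex.exp (2 * (π : ℂ) * I * (a2 : ℂ) / (3 * (p : ℂ)))

lemma aux_abs (φ r : ℝ) (hr : 0 ≤ r) :
    ‖Complex.exp ((φ:ℂ)*I) * (r:ℂ)‖ = r := by
  rw [norm_mul, Complex.norm_exp_ofReal_mul_I, Complex.norm_of_nonneg hr, one_mul]

lemma aux_rep (ε : ℤ) (φ r : ℝ) (hr : 0 ≤ r) (z : ℂ)
    (hz : z = Complex.exp ((φ:ℂ)*I) * (r:ℂ))
    (hε : Complex.exp ((φ:ℂ)*I) = -(ε:ℂ) * Complex.exp (-(2*(π:ℂ)*I*(ε:ℂ))/3))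
    (hc : 2 * Real.cos φ = (ε:ℝ)) :
    z = -(ε : ℂ) * Complex.exp (-(2 * (π : ℂ) * I * (ε : ℂ)) / 3) *
          (‖z‖ : ℂ) ∧
      z + (starRingEnd ℂ) z - (ε : ℂ) * (‖z‖ : ℂ) = 0 := by
  have habs : (‖z‖ : ℝ) = r := by rw [hz]; exact aux_abs φ r hr
  constructor
  · rw [habs, hz, hε]
  · have hconj : (starRingEnd ℂ) z = Complex.exp (-(φ:ℂ)*I) * (r:ℂ) := by
      rw [hz, map_mul, ← Complex.exp_conj]
      simp [Complex.conj_ofReal]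
    rw [habs, hconj, hz]
    have h2 : Complex.exp ((φ:ℂ)*I) + Complex.exp (-(φ:ℂ)*I) = (ε:ℂ) := by
      have : Complex.exp ((φ:ℂ)*I) + Complex.exp (-(φ:ℂ)*I) = 2 * Complex.cos (φ:ℂ) := by
        rw [Complex.cos]; ring
      rw [this, ← Complex.ofReal_cos]
      exact_mod_cast congrArg (Complex.ofReal) hc
    linear_combination (r:ℂ) * h2

lemma cos_bound (s c : ℝ) (hc : c ≤ π) (hs : |s| ≤ c) : Real.cos c ≤ Real.cos s := by
  have := Real.cos_le_cos_of_nonneg_of_le_pi (abs_nonneg s) hc hs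
  rwa [Real.cos_abs] at this

lemma hε_pos : Complex.exp (((π/3:ℝ):ℂ)*I) =
    -((1:ℤ):ℂ) * Complex.exp (-(2*(π:ℂ)*I*((1:ℤ):ℂ))/3) := by
  have : -(2*(π:ℂ)*I*((1:ℤ):ℂ))/3 = ((π/3:ℝ):ℂ)*I + (-((π:ℂ)*I)) := by
    push_cast; ring
  rw [this, Complex.exp_add, Complex.exp_neg, Complex.exp_pi_mul_I]
  push_cast; ring

lemma hε_neg : Complex.exp (((2*π/3:ℝ):ℂ)*I) =
    -((-1:ℤ):ℂ) * Complex.exp (-(2*(π:ℂ)*I*((-1:ℤ):ℂ))/3) := by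
  have : -(2*(π:ℂ)*I*((-1:ℤ):ℂ))/3 = ((2*π/3:ℝ):ℂ)*I := by push_cast; ring
  rw [this]; push_cast; ring

lemma hz1 (p : ℕ) (hp0 : (p:ℂ) ≠ 0) (a1 : ℤ) :
    Rval p a1 ((p:ℤ) - a1) = Complex.exp (((π/3:ℝ):ℂ)*I) *
      ((2 * Real.cos (π*(2*a1 - p)/(3*p)) - 1 : ℝ):ℂ) := by
  rw [Rval]
  push_cast [Complex.ofReal_cos]
  rw [Complex.cos]
  rw [show (2 * (π : ℂ) * I * ((a1:ℂ) + ((p:ℂ) - (a1:ℂ)))) = 2 * (π:ℂ) * I * (p:ℂ) by ring]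
  have e1 : -(2 * (π:ℂ) * I * (p:ℂ)) / (3 * (p:ℂ)) = ((π/3:ℝ):ℂ)*I + (-((π:ℂ)*I)) := by
    push_cast; field_simp; ring
  have e2 : 2 * (π:ℂ) * I * (a1:ℂ) / (3 * (p:ℂ)) =
      ((π/3:ℝ):ℂ)*I + ((π:ℂ)*(2*(a1:ℂ) - (p:ℂ))/(3*(p:ℂ)))*I := by
    push_cast; field_simp; ring
  have e3 : 2 * (π:ℂ) * I * ((p:ℂ) - (a1:ℂ)) / (3 * (p:ℂ)) =
      ((π/3:ℝ):ℂ)*I + (-((π:ℂ)*(2*(a1:ℂ) - (p:ℂ))/(3*(p:ℂ))*I)) := by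
    push_cast; field_simp; ring
  rw [e1, e2, e3, Complex.exp_add, Complex.exp_add, Complex.exp_add,
    Complex.exp_neg ((π:ℂ)*I), Complex.exp_pi_mul_I]
  push_cast
  field_simp
  ring

lemma hz2 (p : ℕ) (hp0 : (p:ℂ) ≠ 0) (a2 : ℤ) :
    Rval p (p:ℤ) a2 = Complex.exp (((2*π/3:ℝ):ℂ)*I) *
      ((1 + 2 * Real.cos (2*π*(a2 - p)/(3*p)) : ℝ):ℂ) := by
  rw [Rval]
  push_cast [Complex.ofReal_cos]
  rw [Complex.cos]
  have e1 : -(2 * (π:ℂ) * I * ((p:ℂ) + (a2:ℂ))) / (3 * (p:ℂ)) =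
      (((2*π/3:ℝ):ℂ)*I + (-(2*(π:ℂ)*((a2:ℂ) - (p:ℂ))/(3*(p:ℂ))*I))) + (-(2*(π:ℂ)*I)) := by
    push_cast; field_simp; ring
  have e2 : 2 * (π:ℂ) * I * (p:ℂ) / (3 * (p:ℂ)) = ((2*π/3:ℝ):ℂ)*I := by
    push_cast; field_simp
  have e3 : 2 * (π:ℂ) * I * (a2:ℂ) / (3 * (p:ℂ)) =
      ((2*π/3:ℝ):ℂ)*I + (2*(π:ℂ)*((a2:ℂ) - (p:ℂ))/(3*(p:ℂ)))*I := by
    push_cast; field_simp; ring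
  rw [e1, e2, e3, Complex.exp_add, Complex.exp_add, Complex.exp_add,
    Complex.exp_neg (2*(π:ℂ)*I), Complex.exp_two_pi_mul_I]
  push_cast
  field_simp
  ring

lemma Rval_swap (p : ℕ) (a1 a2 : ℤ) : Rval p a1 a2 = Rval p a2 a1 := by
  rw [Rval, Rval, add_comm ((a1:ℂ))]; ring

/-- for `κ = 3/p`, `p ≥ 2`, `gcd(p,3) = 1`, and a weight `μ ∈ E_p` of
`sl(3)` lying on a shifted hyperplane `H_α^{(p)}` (`⟨μ+ρ̄, α⟩ = p` for a positive root
`α ∈ {θ, α_1, α_2}`), one has `R(μ) = −ε e^{-2πiε/3} |R(μ)|` with `ε = +1` for `α = θ`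
and `ε = −1` for `α = α_1, α_2`; consequently `R(μ) + R̄(μ) − ε |R(μ)| = 0`. -/
theorem statement15 (p : ℕ) (hp : 2 ≤ p) (hcop : Nat.Coprime p 3)
    (a1 a2 : ℤ) (h1 : 1 ≤ a1) (h1' : a1 ≤ (p : ℤ)) (h2 : 1 ≤ a2) (h2' : a2 ≤ (p : ℤ))
    (ε : ℤ)
    (hcase : (a1 + a2 = (p : ℤ) ∧ ε = 1) ∨ (a1 = (p : ℤ) ∧ ε = -1) ∨
      (a2 = (p : ℤ) ∧ ε = -1)) :
    Rval p a1 a2 =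
        -(ε : ℂ) * Complex.exp (-(2 * (π : ℂ) * I * (ε : ℂ)) / 3) *
          (‖Rval p a1 a2‖ : ℂ) ∧
      Rval p a1 a2 + (starRingEnd ℂ) (Rval p a1 a2) -
          (ε : ℂ) * (‖Rval p a1 a2‖ : ℂ) = 0 := by
  have hp0 : (p:ℂ) ≠ 0 := by
    exact_mod_cast Nat.cast_ne_zero.mpr (by omega)
  have hpR : (0:ℝ) < (p:ℝ) := by exact_mod_cast Nat.pos_of_ne_zero (by omega)
  rcases hcase with ⟨ha, hε⟩ | ⟨ha, hε⟩ | ⟨ha, hε⟩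
  · -- a1 + a2 = p, ε = 1
    subst hε
    have ha2 : a2 = (p:ℤ) - a1 := by omega
    subst ha2
    set s : ℝ := π*(2*a1 - p)/(3*p) with hs_def
    have hsb : |s| ≤ π/3 := by
      rw [hs_def, abs_div, abs_mul, _root_.abs_of_nonneg Real.pi_pos.le,
        _root_.abs_of_pos (by positivity : (0:ℝ) < 3*(p:ℝ)), div_le_div_iff₀ (by positivity) (by norm_num)]
      have habs : |(2*(a1:ℝ) - (p:ℝ))| ≤ (p:ℝ) := by
        rw [abs_le]; constructor
        · have : (0:ℝ) ≤ (a1:ℝ) := by exact_mod_cast (by omega : (0:ℤ) ≤ a1)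
          linarith
        · have : (a1:ℝ) ≤ (p:ℝ) := by exact_mod_cast h1'
          linarith
      nlinarith [Real.pi_pos]
    have hr : (0:ℝ) ≤ 2 * Real.cos s - 1 := by
      have := cos_bound s (π/3) (by linarith [Real.pi_pos]) hsb
      rw [Real.cos_pi_div_three] at this
      linarith
    exact aux_rep 1 (π/3) _ hr _ (hz1 p hp0 a1) hε_pos
      (by rw [Real.cos_pi_div_three]; norm_num)
  · -- a1 = p, ε = -1
    subst hε; subst ha
    set s : ℝ := 2*π*((a2:ℝ) - p)/(3*p) with hs_def
    have hsb : |s| ≤ 2*π/3 := by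
      rw [hs_def, abs_div, abs_mul, _root_.abs_of_nonneg (by positivity : (0:ℝ) ≤ 2*π),
        _root_.abs_of_pos (by positivity : (0:ℝ) < 3*(p:ℝ)), div_le_div_iff₀ (by positivity) (by norm_num)]
      have habs : |((a2:ℝ) - (p:ℝ))| ≤ (p:ℝ) := by
        rw [abs_le]; constructor
        · have : (1:ℝ) ≤ (a2:ℝ) := by exact_mod_cast h2
          linarith
        · have : (a2:ℝ) ≤ (p:ℝ) := by exact_mod_cast h2'
          linarith
      nlinarith [Real.pi_pos]
    have hr : (0:ℝ) ≤ 1 + 2 * Real.cos s := by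
      have := cos_bound s (2*π/3) (by linarith [Real.pi_pos]) hsb
      have hcv : Real.cos (2*π/3) = -(1/2) := by
        rw [show (2*π/3 : ℝ) = π - π/3 by ring, Real.cos_pi_sub, Real.cos_pi_div_three]
      rw [hcv] at this
      linarith
    exact aux_rep (-1) (2*π/3) _ hr _ (hz2 p hp0 a2) hε_neg
      (by rw [show (2*π/3 : ℝ) = π - π/3 by ring, Real.cos_pi_sub, Real.cos_pi_div_three]; norm_num)
  · -- a2 = p, ε = -1
    subst hε; subst ha
    rw [Rval_swap]
    set s : ℝ := 2*π*((a1:ℝ) - p)/(3*p) with hs_def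
    have hsb : |s| ≤ 2*π/3 := by
      rw [hs_def, abs_div, abs_mul, _root_.abs_of_nonneg (by positivity : (0:ℝ) ≤ 2*π),
        _root_.abs_of_pos (by positivity : (0:ℝ) < 3*(p:ℝ)), div_le_div_iff₀ (by positivity) (by norm_num)]
      have habs : |((a1:ℝ) - (p:ℝ))| ≤ (p:ℝ) := by
        rw [abs_le]; constructor
        · have : (1:ℝ) ≤ (a1:ℝ) := by exact_mod_cast h1
          linarith
        · have : (a1:ℝ) ≤ (p:ℝ) := by exact_mod_cast h1'
          linarith
      nlinarith [Real.pi_pos]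
    have hr : (0:ℝ) ≤ 1 + 2 * Real.cos s := by
      have := cos_bound s (2*π/3) (by linarith [Real.pi_pos]) hsb
      have hcv : Real.cos (2*π/3) = -(1/2) := by
        rw [show (2*π/3 : ℝ) = π - π/3 by ring, Real.cos_pi_sub, Real.cos_pi_div_three]
      rw [hcv] at this
      linarith
    exact aux_rep (-1) (2*π/3) _ hr _ (hz2 p hp0 a1) hε_neg
      (by rw [show (2*π/3 : ℝ) = π - π/3 by ring, Real.cos_pi_sub, Real.cos_pi_div_three]; norm_num)
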